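/- Let X be a real-valued random variable such that E e^{tX} < ∞ for some t > 0, and let L_X(t) := ln E e^{tX} for t > 0. Then for every u ∈ ℝ, P(X > L_X^{*←}(u)) ≤ e^{−u}, where the event {X > −∞} is all of the sample space and {X > ∞} is empty when L_X^{*←}(u) is infinite. -/
import Mathlib


open Set MeasureTheory Filter

/-- Legendre–Fenchel transform `L^*(x) = sup_{t>0} [t·x − L(t)]`, with values in `[-∞,∞]`. -/
noncomputable def LF (L : ℝ → EReal) (x : ℝ) : EReal :=
  ⨆ (t : ℝ) (_ : 0 < t), ((t * x : ℝ) : EReal) - L t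

/-- Smallest generalized inverse `L^{*←}(u) = inf {x ∈ ℝ : L^*(x) ≥ u}`, with `inf ∅ = ∞`. -/
noncomputable def geInv (L : ℝ → EReal) (u : ℝ) : EReal :=
  sInf ((fun x : ℝ => (x : EReal)) '' {x : ℝ | (u : EReal) ≤ LF L x})

/-- Largest generalized inverse `L^{*⇐}(u) = inf {x ∈ ℝ : L^*(x) > u}`, with `inf ∅ = ∞`. -/
noncomputable def tgeInv (L : ℝ → EReal) (u : ℝ) : EReal :=
  sInf ((fun x : ℝ => (x : EReal)) '' {x : ℝ | (u : EReal) < LF L x})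

/-- Hölder convolution `(L_1 ⊞ ⋯ ⊞ L_n)(t) = inf { Σ_j α_j L_j(t/α_j) : α_j > 0, Σ_j α_j = 1 }`,
with `inf ∅ = ∞`. -/
noncomputable def hconv (n : ℕ) (L : Fin n → ℝ → EReal) (t : ℝ) : EReal :=
  ⨅ (α : Fin n → ℝ) (_ : (∀ j, 0 < α j) ∧ ∑ j, α j = 1),
    ∑ j, (α j : EReal) * L j (t / α j)

/-- Cramér–Chernoff function `L_X(t) = ln E e^{tX}`, with values in `(-∞,∞]`. -/
noncomputable def cramer {Ω : Type*} [MeasurableSpace Ω] (μ : Measure Ω) (X : Ω → ℝ)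
    (t : ℝ) : EReal :=
  ENNReal.log (∫⁻ ω, ENNReal.ofReal (Real.exp (t * X ω)) ∂μ)


lemma LF_mono (L : ℝ → EReal) : Monotone (LF L) := by
  intro x y hxy
  refine iSup₂_mono fun t ht => EReal.sub_le_sub ?_ le_rfl
  exact_mod_cast mul_le_mul_of_nonneg_left hxy ht.le

lemma chernoff {Ω : Type*} [MeasurableSpace Ω] (μ : Measure Ω) [IsProbabilityMeasure μ]
    (X : Ω → ℝ) (hX : Measurable X) {x u : ℝ} (h : (u : EReal) ≤ LF (cramer μ X) x) :
    μ {ω | x < X ω} ≤ ENNReal.ofReal (Real.exp (-u)) := by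
  set A := {ω | x < X ω} with hA
  have hc : ENNReal.log (ENNReal.ofReal (Real.exp (-u))) = ((-u : ℝ) : EReal) := by
    rw [ENNReal.log_ofReal_of_pos (Real.exp_pos _), Real.log_exp]
  rw [← ENNReal.log_le_log_iff, hc]
  have key : ∀ t : ℝ, 0 < t →
      ((t * x : ℝ) : EReal) - cramer μ X t ≤ - ENNReal.log (μ A) := by
    intro t ht
    have hmono : A ⊆ {ω | ENNReal.ofReal (Real.exp (t * x)) ≤ ENNReal.ofReal (Real.exp (t * X ω))} := by
      intro ω hω
      exact ENNReal.ofReal_le_ofReal (Real.exp_le_exp.2 (mul_le_mul_of_nonneg_left (le_of_lt hω) ht.le))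
    have markov : ENNReal.ofReal (Real.exp (t * x)) * μ A ≤
        ∫⁻ ω, ENNReal.ofReal (Real.exp (t * X ω)) ∂μ := by
      calc ENNReal.ofReal (Real.exp (t * x)) * μ A
          ≤ ENNReal.ofReal (Real.exp (t * x)) *
            μ {ω | ENNReal.ofReal (Real.exp (t * x)) ≤ ENNReal.ofReal (Real.exp (t * X ω))} :=
            mul_le_mul_right (measure_mono hmono) _
        _ ≤ _ := mul_meas_ge_le_lintegral₀
            ((measurable_const.mul hX).exp.ennreal_ofReal.aemeasurable) _
    have hlogm : ((t * x : ℝ) : EReal) + ENNReal.log (μ A) ≤ cramer μ X t := by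
      have := ENNReal.log_monotone markov
      rwa [ENNReal.log_mul_add, ENNReal.log_ofReal_of_pos (Real.exp_pos _), Real.log_exp] at this
    have hbne : ENNReal.log (μ A) ≠ ⊤ := by
      simp [ENNReal.log_eq_top_iff, measure_ne_top]
    rcases eq_or_ne (ENNReal.log (μ A)) ⊥ with hb | hb
    · simp [hb]
    · lift ENNReal.log (μ A) to ℝ using ⟨hbne, hb⟩ with b hbeq
      have hcne : cramer μ X t ≠ ⊥ := by
        intro hbot
        rw [hbot, le_bot_iff] at hlogm
        rw [← EReal.coe_add] at hlogm
        exact (EReal.coe_ne_bot _) hlogm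
      rw [EReal.sub_le_iff_le_add (Or.inl hcne) (Or.inr (by simp : -(b : EReal) ≠ ⊥))]
      rcases eq_or_ne (cramer μ X t) ⊤ with hct | hct
      · simp [hct]
      · lift cramer μ X t to ℝ using ⟨hct, hcne⟩ with c
        rw [← EReal.coe_add] at hlogm
        rw [← EReal.coe_neg, ← EReal.coe_add]
        rw [EReal.coe_le_coe_iff] at hlogm ⊢
        linarith
  have hsup : LF (cramer μ X) x ≤ - ENNReal.log (μ A) := iSup₂_le key
  have : (u : EReal) ≤ - ENNReal.log (μ A) := h.trans hsup
  exact EReal.le_neg_of_le_neg this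

/-- For a real random variable `X` with `E e^{tX} < ∞` for some `t > 0`,
one has `P(X > L_X^{*←}(u)) ≤ e^{-u}` for all real `u`. -/
theorem prob_gt_geInv_le (Ω : Type*) [MeasurableSpace Ω] (μ : Measure Ω)
    [IsProbabilityMeasure μ] (X : Ω → ℝ) (hX : Measurable X)
    (hfin : ∃ t : ℝ, 0 < t ∧ ∫⁻ ω, ENNReal.ofReal (Real.exp (t * X ω)) ∂μ ≠ ⊤)
    (u : ℝ) :
    μ {ω | geInv (cramer μ X) u < (X ω : EReal)} ≤ ENNReal.ofReal (Real.exp (-u)) := by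
  set I := geInv (cramer μ X) u with hI
  have hup : ∀ q : ℚ, I < ((q : ℝ) : EReal) → (u : EReal) ≤ LF (cramer μ X) (q : ℝ) := by
    intro q hq
    obtain ⟨b, hbS, hblt⟩ := sInf_lt_iff.mp hq
    obtain ⟨y, hy, rfl⟩ := hbS
    exact hy.trans (LF_mono _ (le_of_lt (EReal.coe_lt_coe_iff.1 hblt)))
  set s : ℚ → Set Ω := fun q => {ω | I < ((q : ℝ) : EReal) ∧ (q : ℝ) < X ω} with hs
  have hcover : {ω | I < (X ω : EReal)} = ⋃ q, s q := by
    ext ω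
    simp only [mem_setOf_eq, mem_iUnion, hs]
    constructor
    · intro h
      obtain ⟨r, hIr, hrX⟩ := EReal.exists_between_coe_real h
      obtain ⟨q, hrq, hqX⟩ := exists_rat_btwn (EReal.coe_lt_coe_iff.1 hrX)
      exact ⟨q, hIr.trans (by exact_mod_cast hrq), hqX⟩
    · rintro ⟨q, h1, h2⟩
      exact h1.trans (by exact_mod_cast h2)
  have hdir : Directed (· ⊆ ·) s := by
    intro q q'
    by_cases hq : I < ((q : ℝ) : EReal)
    · by_cases hq' : I < ((q' : ℝ) : EReal)
      · refine ⟨min q q', ?_, ?_⟩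
        · rintro ω ⟨h1, h2⟩
          refine ⟨?_, lt_of_le_of_lt (by exact_mod_cast min_le_left q q') h2⟩
          rcases min_cases q q' with ⟨h, _⟩ | ⟨h, _⟩ <;> rw [h] <;> assumption
        · rintro ω ⟨h1, h2⟩
          refine ⟨?_, lt_of_le_of_lt (by exact_mod_cast min_le_right q q') h2⟩
          rcases min_cases q q' with ⟨h, _⟩ | ⟨h, _⟩ <;> rw [h] <;> assumption
      · exact ⟨q, subset_rfl, fun ω hω => absurd hω.1 hq'⟩
    · exact ⟨q', fun ω hω => absurd hω.1 hq, subset_rfl⟩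
  rw [hcover, hdir.measure_iUnion]
  refine iSup_le fun q => ?_
  by_cases hq : I < ((q : ℝ) : EReal)
  · refine le_trans (measure_mono fun ω hω => hω.2) ?_
    exact chernoff μ X hX (hup q hq)
  · have : s q = ∅ := eq_empty_of_forall_notMem fun ω hω => hq hω.1
    simp [this]
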